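/- Assume b is negative definite on T^⊥, i.e. b(w, w) < 0 for every nonzero w ∈ T^⊥. If g τ = τ (via the ℂ-linear extension of g), then g x = x for every x ∈ S. (This is the computation showing ker(χ_τ) = Γ̃_{S^⊥} for the stabilizer of a point τ of the orthogonal symmetric domain.) -/
import Mathlib


open scoped TensorProduct

/-- If `b` is negative definite on `T^⊥` and the `ℂ`-linear extension of the isometry `g`
fixes `τ`, then `g` fixes every element of `S`.  (This shows `ker(χ_τ) = Γ̃_{S^⊥}`.) -/
theorem stmt8 (V : Type*) [AddCommGroup V] [Module ℝ V] [FiniteDimensional ℝ V]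
    (b : LinearMap.BilinForm ℝ V) (hb : b.IsSymm)
    (g : V ≃ₗ[ℝ] V) (hg : ∀ x y : V, b (g x) (g y) = b x y)
    (L : AddSubgroup V) (hgL : (fun x => g x) '' (L : Set V) = (L : Set V))
    (X Y : V) (τ : ℂ ⊗[ℝ] V) (hτ : τ = (1 : ℂ) ⊗ₜ[ℝ] X + Complex.I ⊗ₜ[ℝ] Y)
    (Tperp S : Set V)
    (hT : Tperp = {x : V | x ∈ L ∧ b x X = 0 ∧ b x Y = 0})
    (hS : S = {x : V | x ∈ L ∧ ∀ w ∈ Tperp, b x w = 0})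
    (hnegdef : ∀ w ∈ Tperp, w ≠ 0 → b w w < 0)
    (heig : LinearMap.baseChange ℂ (g : V →ₗ[ℝ] V) τ = τ) :
    ∀ x ∈ S, g x = x := by
  intro x hx
  rw [hS] at hx
  obtain ⟨hxL, hxS⟩ := hx
  -- extract g X = X and g Y = Y
  have key : (1 : ℂ) ⊗ₜ[ℝ] (g X) + Complex.I ⊗ₜ[ℝ] (g Y)
      = (1 : ℂ) ⊗ₜ[ℝ] X + Complex.I ⊗ₜ[ℝ] Y := by
    rw [hτ] at heig
    simpa [LinearMap.baseChange_tmul] using heig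
  have hmap : ∀ (f : ℂ →ₗ[ℝ] ℝ),
      f 1 • g X + f Complex.I • g Y = f 1 • X + f Complex.I • Y := by
    intro f
    have := congrArg (fun t => TensorProduct.lid ℝ V (LinearMap.rTensor V f t)) key
    simpa [LinearMap.rTensor_tmul] using this
  have hgX : g X = X := by simpa using hmap Complex.reLm
  have hgY : g Y = Y := by simpa using hmap Complex.imLm
  -- g and g⁻¹ preserve L
  have hgL' : ∀ v : V, v ∈ L → g v ∈ L := by
    intro v hv
    have : g v ∈ (fun x => g x) '' (L : Set V) := ⟨v, hv, rfl⟩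
    rwa [hgL] at this
  have hgLinv : ∀ v : V, v ∈ L → g.symm v ∈ L := by
    intro v hv
    have hv' : v ∈ (L : Set V) := hv
    rw [← hgL] at hv'
    obtain ⟨u, hu, rfl⟩ := hv'
    simpa using hu
  -- w := g x - x ∈ Tperp
  set w := g x - x with hw
  have hwT : w ∈ Tperp := by
    rw [hT]
    refine ⟨L.sub_mem (hgL' x hxL) hxL, ?_, ?_⟩
    · have : b (g x) X = b x X := by
        conv_lhs => rw [← hgX]
        exact hg x X
      simp [hw, this]
    · have : b (g x) Y = b x Y := by
        conv_lhs => rw [← hgY]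
        exact hg x Y
      simp [hw, this]
  -- g⁻¹ w ∈ Tperp
  have hwT' : g.symm w ∈ Tperp := by
    rw [hT] at hwT ⊢
    obtain ⟨hwL, hwX, hwY⟩ := hwT
    refine ⟨hgLinv w hwL, ?_, ?_⟩
    · have := hg (g.symm w) X
      rw [g.apply_symm_apply] at this
      rw [← this, hgX, hwX]
    · have := hg (g.symm w) Y
      rw [g.apply_symm_apply] at this
      rw [← this, hgY, hwY]
  -- b w w = 0
  have hbww : b w w = 0 := by
    have h1 : b x w = 0 := hxS w hwT
    have h2 : b (g x) w = 0 := by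
      have := hg x (g.symm w)
      rw [g.apply_symm_apply] at this
      rw [this]
      exact hxS _ hwT'
    have : b w w = b (g x) w - b x w := by
      simp [hw]
    rw [this, h1, h2, sub_zero]
  -- conclude
  by_contra hne
  have hwne : w ≠ 0 := by
    intro h0
    apply hne
    have := sub_eq_zero.mp (hw ▸ h0)
    exact this
  exact absurd hbww (ne_of_lt (hnegdef w hwT hwne))
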